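/- Let G be a topological group. Then there exists a subgroup H ⊆ G such that the pair (G,H) is relatively extremely amenable, and H is maximal with this property: for every subgroup H' of G with H ⊆ H' and (G,H') relatively extremely amenable, one has H' = H. -/

import Mathlib

/-- A topological group `G` is *extremely amenable* if every continuous action of `G`
on a nonempty compact Hausdorff space has a `G`-fixed point. -/
def ExtremelyAmenable (G : Type) [Group G] [TopologicalSpace G] : Prop :=
  ∀ (X : Type) [TopologicalSpace X] [CompactSpace X] [T2Space X] [Nonempty X]
    [MulAction G X] [ContinuousSMul G X], ∃ x : X, ∀ g : G, g • x = x

/-- The pair `(G, H)` is *relatively extremely amenable* if every continuous action of `G`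
on a nonempty compact Hausdorff space has a point fixed by every element of `H`. -/
def RelativelyExtremelyAmenable (G : Type) [Group G] [TopologicalSpace G] (H : Subgroup G) :
    Prop :=
  ∀ (X : Type) [TopologicalSpace X] [CompactSpace X] [T2Space X] [Nonempty X]
    [MulAction G X] [ContinuousSMul G X], ∃ x : X, ∀ h ∈ H, h • x = x

theorem rea_bot (G : Type) [Group G] [TopologicalSpace G] :
    RelativelyExtremelyAmenable G ⊥ := by
  intro X _ _ _ hne _ _
  obtain ⟨x⟩ := hne
  exact ⟨x, by rintro h rfl; simp⟩

theorem rea_sSup_chain (G : Type) [Group G] [TopologicalSpace G]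
    (c : Set (Subgroup G)) (hne : c.Nonempty) (hc : IsChain (· ≤ ·) c)
    (hall : ∀ H ∈ c, RelativelyExtremelyAmenable G H) :
    RelativelyExtremelyAmenable G (sSup c) := by
  intro X _ _ _ _ _ _
  have : Nonempty c := hne.to_subtype
  set F : c → Set X := fun H => {x | ∀ h ∈ (H : Subgroup G), h • x = x} with hF
  have hFcl : ∀ H : c, IsClosed (F H) := by
    intro H
    have : F H = ⋂ h ∈ (H : Subgroup G), {x : X | h • x = x} := by
      ext x; simp [hF, Set.mem_iInter]
    rw [this]
    exact isClosed_biInter fun h _ =>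
      isClosed_eq (continuous_const_smul h) continuous_id
  have hFne : ∀ H : c, (F H).Nonempty := by
    intro H
    obtain ⟨x, hx⟩ := hall H H.2 X
    exact ⟨x, hx⟩
  have hdir : Directed (· ⊇ ·) F := by
    intro i j
    rcases hc.total i.2 j.2 with h | h
    · exact ⟨j, fun x hx g hg => hx g (h hg), fun x hx => hx⟩
    · exact ⟨i, fun x hx => hx, fun x hx g hg => hx g (h hg)⟩
  obtain ⟨x, hx⟩ := IsCompact.nonempty_iInter_of_directed_nonempty_isCompact_isClosed
    F hdir hFne (fun H => (hFcl H).isCompact) hFcl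
  refine ⟨x, fun h hh => ?_⟩
  rw [Subgroup.mem_sSup_of_directedOn hne hc.directedOn] at hh
  obtain ⟨H, hH, hhH⟩ := hh
  exact Set.mem_iInter.1 hx ⟨H, hH⟩ h hhH

/-- Every topological group `G` admits a subgroup `H` such that `(G, H)` is relatively
extremely amenable and `H` is maximal with this property. -/
theorem exists_maximally_relativelyExtremelyAmenable
    (G : Type) [Group G] [TopologicalSpace G] [IsTopologicalGroup G] :
    ∃ H : Subgroup G, RelativelyExtremelyAmenable G H ∧
      ∀ H' : Subgroup G, H ≤ H' → RelativelyExtremelyAmenable G H' → H' = H := by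
  obtain ⟨m, -, hm⟩ := zorn_le_nonempty₀ {H : Subgroup G | RelativelyExtremelyAmenable G H}
    (fun c hcs hc y hy =>
      ⟨sSup c, rea_sSup_chain G c ⟨y, hy⟩ hc (fun H hH => hcs hH),
        fun z hz => le_sSup hz⟩)
    ⊥ (rea_bot G)
  exact ⟨m, hm.1, fun H' hle hH' => le_antisymm (hm.2 hH' hle) hle⟩
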